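/- Let Ω be a nonempty finite set equipped, for some δ > 0, with the metric ρ(x,y) := δ·1{x ≠ y}, and let r ∈ [1,∞). For any Borel probability measure P on Ω, if P̂ is the empirical distribution of n i.i.d. samples from P, then E[W_r^r(P, P̂)] ≤ δ^r · √((|Ω| − 1)/n). -/

import Mathlib

open MeasureTheory ENNReal

noncomputable section

/-- The set of couplings of two measures. -/
def couplings {Ω : Type*} [MeasurableSpace Ω] (P Q : Measure Ω) : Set (Measure (Ω × Ω)) :=
  {μ | μ.map Prod.fst = P ∧ μ.map Prod.snd = Q}

/-- `W_r^r(P,Q)`, the `r`-th power of the `r`-Wasserstein distance. -/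
def wassersteinPow {Ω : Type*} [MeasurableSpace Ω] [PseudoEMetricSpace Ω] (r : ℝ)
    (P Q : Measure Ω) : ℝ≥0∞ :=
  ⨅ μ ∈ couplings P Q, ∫⁻ p : Ω × Ω, edist p.1 p.2 ^ r ∂μ

/-- The `r`-Wasserstein distance. -/
def wasserstein {Ω : Type*} [MeasurableSpace Ω] [PseudoEMetricSpace Ω] (r : ℝ)
    (P Q : Measure Ω) : ℝ≥0∞ :=
  (wassersteinPow r P Q) ^ (1 / r)

/-- The empirical measure of `n` samples. -/
def empiricalMeasure {Ω : Type*} [MeasurableSpace Ω] (n : ℕ) (x : Fin n → Ω) : Measure Ω :=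
  (n : ℝ≥0∞)⁻¹ • ∑ i : Fin n, Measure.dirac (x i)

/-- `𝒮` is a countable-or-not Borel partition of the set `B`. -/
def IsBorelPartitionOf {Ω : Type*} [MeasurableSpace Ω] (𝒮 : Set (Set Ω)) (B : Set Ω) : Prop :=
  (∀ S ∈ 𝒮, MeasurableSet S) ∧ ⋃₀ 𝒮 = B ∧ 𝒮.PairwiseDisjoint id

/-- The resolution of a partition: the largest diameter of any of its elements. -/
def partRes {Ω : Type*} [PseudoEMetricSpace Ω] (𝒮 : Set (Set Ω)) : ℝ≥0∞ :=
  ⨆ S ∈ 𝒮, EMetric.diam S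

/-- The `ε`-covering number of a Borel set `B`: the minimal cardinality of a countable
Borel partition of `B` all of whose elements have diameter at most `ε`. -/
def coveringNumber {Ω : Type*} [MeasurableSpace Ω] [PseudoEMetricSpace Ω]
    (B : Set Ω) (ε : ℝ) : ℝ≥0∞ :=
  ⨅ (𝒮 : Set (Set Ω)) (_ : IsBorelPartitionOf 𝒮 B ∧ 𝒮.Countable ∧
      ∀ S ∈ 𝒮, EMetric.diam S ≤ ENNReal.ofReal ε), (𝒮.encard : ℝ≥0∞)

/-- The separation of a set: the smallest distance between distinct points. -/
def eSep {Ω : Type*} [PseudoEMetricSpace Ω] (S : Set Ω) : ℝ≥0∞ :=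
  ⨅ (x ∈ S) (y ∈ S) (_ : x ≠ y), edist x y

/-- `|a - b|` for extended nonnegative reals. -/
def ennrDiff (a b : ℝ≥0∞) : ℝ≥0∞ := (a - b) + (b - a)

/-- The `ℓ`-th metric moment of `P` about `x₀`. -/
def metricMoment {Ω : Type*} [MeasurableSpace Ω] [PseudoEMetricSpace Ω]
    (P : Measure Ω) (x₀ : Ω) (ℓ : ℝ) : ℝ≥0∞ :=
  (∫⁻ y, edist x₀ y ^ ℓ ∂P) ^ (1 / ℓ)

end

open Set

section Coupling

variable {Ω : Type*} [Fintype Ω] [MeasurableSpace Ω] [MeasurableSingletonClass Ω]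

lemma meas_eq_sum (μ : Measure Ω) : μ = ∑ x : Ω, μ {x} • Measure.dirac x := by
  refine Measure.ext_of_singleton fun a => ?_
  rw [Measure.finset_sum_apply]
  classical
  simp only [Measure.smul_apply, Measure.dirac_apply' _ (measurableSet_singleton a),
    Set.indicator, Set.mem_singleton_iff, smul_eq_mul, mul_ite, mul_one, mul_zero,
    Pi.one_apply]
  simp [Finset.sum_ite_eq' Finset.univ a (fun x => μ {x})]

lemma wpow_le [MetricSpace Ω] [BorelSpace Ω] (r : ℝ) (hr0 : 0 < r) (δe : ℝ≥0∞) (hδe : δe ≠ ∞)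
    (hedist : ∀ x y : Ω, edist x y ≤ δe)
    (P Q : Measure Ω) [IsProbabilityMeasure P] [IsProbabilityMeasure Q] :
    wassersteinPow r P Q ≤ δe ^ r * ∑ x : Ω, (P {x} - Q {x}) := by
  classical
  have hdiag : Measurable (fun x : Ω => (x, x)) := measurable_id.prodMk measurable_id
  have hf : Measurable (fun pr : Ω × Ω => edist pr.1 pr.2 ^ r) :=
    measurable_edist.pow measurable_const
  set p : Ω → ℝ≥0∞ := fun x => P {x} with hp
  set q : Ω → ℝ≥0∞ := fun x => Q {x} with hq
  set a : Ω → ℝ≥0∞ := fun x => p x - q x with ha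
  set b : Ω → ℝ≥0∞ := fun x => q x - p x with hb
  set m : Ω → ℝ≥0∞ := fun x => min (p x) (q x) with hm
  have hsum_apply : ∀ (c : Ω → ℝ≥0∞) (y : Ω), (∑ x : Ω, c x • Measure.dirac x) {y} = c y := by
    intro c y
    rw [Measure.finset_sum_apply]
    simp only [Measure.smul_apply, Measure.dirac_apply' _ (measurableSet_singleton y),
      Set.indicator, Set.mem_singleton_iff, smul_eq_mul, mul_ite, mul_one, mul_zero,
      Pi.one_apply]
    simp [Finset.sum_ite_eq' Finset.univ y c]
  have hsum_univ : ∀ (c : Ω → ℝ≥0∞), (∑ x : Ω, c x • Measure.dirac x) univ = ∑ x : Ω, c x := by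
    intro c
    rw [Measure.finset_sum_apply]
    simp
  have hma : ∀ x, m x + a x = p x := by
    intro x
    simp only [hm, ha]
    rcases le_total (p x) (q x) with h | h
    · rw [min_eq_left h, tsub_eq_zero_of_le h, add_zero]
    · rw [min_eq_right h, add_tsub_cancel_of_le h]
  have hmb : ∀ x, m x + b x = q x := by
    intro x
    simp only [hm, hb]
    rcases le_total (q x) (p x) with h | h
    · rw [min_eq_right h, tsub_eq_zero_of_le h, add_zero]
    · rw [min_eq_left h, add_tsub_cancel_of_le h]
  have hsp : ∑ x : Ω, p x = 1 := by
    have := hsum_univ p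
    rw [← meas_eq_sum P] at this
    rw [← this]; exact measure_univ
  have hsq : ∑ x : Ω, q x = 1 := by
    have := hsum_univ q
    rw [← meas_eq_sum Q] at this
    rw [← this]; exact measure_univ
  set T : ℝ≥0∞ := ∑ x : Ω, a x with hT
  have hTle : T ≤ 1 := by
    rw [hT, ← hsp]
    exact Finset.sum_le_sum fun x _ => tsub_le_self
  have hTne : T ≠ ∞ := (lt_of_le_of_lt hTle one_lt_top).ne
  have hmne : (∑ x : Ω, m x) ≠ ∞ := by
    refine (lt_of_le_of_lt ?_ one_lt_top).ne
    rw [← hsp]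
    exact Finset.sum_le_sum fun x _ => min_le_left _ _
  have hTb : ∑ x : Ω, b x = T := by
    have h1 : (∑ x : Ω, m x) + ∑ x : Ω, b x = 1 := by
      rw [← Finset.sum_add_distrib]
      simp_rw [hmb]; exact hsq
    have h2 : (∑ x : Ω, m x) + T = 1 := by
      rw [hT, ← Finset.sum_add_distrib]
      simp_rw [hma]; exact hsp
    exact (ENNReal.add_right_inj hmne).mp (h1.trans h2.symm)
  rcases eq_or_ne T 0 with hT0 | hT0
  · -- P = Q
    have hPQ : P = Q := by
      have hsa : ∑ x : Ω, a x = 0 := by rw [← hT]; exact hT0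
      have haz : ∀ x, a x = 0 := fun x =>
        Finset.sum_eq_zero_iff.mp hsa x (Finset.mem_univ x)
      have hbz : ∀ x, b x = 0 := fun x =>
        Finset.sum_eq_zero_iff.mp (hTb.trans hT0) x (Finset.mem_univ x)
      refine Measure.ext_of_singleton fun x => le_antisymm ?_ ?_
      · exact tsub_eq_zero_iff_le.mp (haz x)
      · exact tsub_eq_zero_iff_le.mp (hbz x)
    set μ : Measure (Ω × Ω) := P.map (fun x => (x, x)) with hμ
    have hmem : μ ∈ couplings P Q := by
      constructor
      · rw [hμ, Measure.map_map measurable_fst hdiag]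
        simp [Function.comp_def]
      · rw [hμ, Measure.map_map measurable_snd hdiag, ← hPQ]
        simp [Function.comp_def]
    have hcost : ∫⁻ pr : Ω × Ω, edist pr.1 pr.2 ^ r ∂μ = 0 := by
      rw [hμ, lintegral_map hf hdiag]
      simp [ENNReal.zero_rpow_of_pos hr0]
    calc wassersteinPow r P Q ≤ ∫⁻ pr : Ω × Ω, edist pr.1 pr.2 ^ r ∂μ := iInf₂_le μ hmem
      _ = 0 := hcost
      _ ≤ _ := zero_le
  · set M : Measure Ω := ∑ x : Ω, m x • Measure.dirac x with hM
    set A : Measure Ω := ∑ x : Ω, a x • Measure.dirac x with hA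
    set B : Measure Ω := ∑ x : Ω, b x • Measure.dirac x with hB
    have hAuniv : A univ = T := by rw [hA, hsum_univ]
    have hBuniv : B univ = T := by rw [hB, hsum_univ, hTb]
    haveI : IsFiniteMeasure A := ⟨by rw [hAuniv]; exact lt_of_le_of_lt hTle one_lt_top⟩
    haveI : IsFiniteMeasure B := ⟨by rw [hBuniv]; exact lt_of_le_of_lt hTle one_lt_top⟩
    set μ : Measure (Ω × Ω) := M.map (fun x => (x, x)) + T⁻¹ • A.prod B with hμ
    have hmem : μ ∈ couplings P Q := by
      constructor
      · rw [hμ, Measure.map_add _ _ measurable_fst, Measure.map_smul,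
          Measure.map_map measurable_fst hdiag, Measure.map_fst_prod, hBuniv,
          smul_smul, ENNReal.inv_mul_cancel hT0 hTne, one_smul]
        have : M.map id = M := Measure.map_id
        rw [show (Prod.fst ∘ fun x : Ω => (x, x)) = id from rfl, this]
        refine Measure.ext_of_singleton fun y => ?_
        rw [Measure.add_apply, hM, hA, hsum_apply, hsum_apply, hma]
      · rw [hμ, Measure.map_add _ _ measurable_snd, Measure.map_smul,
          Measure.map_map measurable_snd hdiag, Measure.map_snd_prod, hAuniv,
          smul_smul, ENNReal.inv_mul_cancel hT0 hTne, one_smul]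
        have : M.map id = M := Measure.map_id
        rw [show (Prod.snd ∘ fun x : Ω => (x, x)) = id from rfl, this]
        refine Measure.ext_of_singleton fun y => ?_
        rw [Measure.add_apply, hM, hB, hsum_apply, hsum_apply, hmb]
    have hcost : ∫⁻ pr : Ω × Ω, edist pr.1 pr.2 ^ r ∂μ ≤ δe ^ r * T := by
      rw [hμ, lintegral_add_measure, lintegral_smul_measure, lintegral_map hf hdiag]
      have h1 : ∫⁻ x, edist x x ^ r ∂M = 0 := by
        simp [ENNReal.zero_rpow_of_pos hr0]
      have h2 : ∫⁻ pr : Ω × Ω, edist pr.1 pr.2 ^ r ∂(A.prod B) ≤ δe ^ r * (T * T) := by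
        calc ∫⁻ pr : Ω × Ω, edist pr.1 pr.2 ^ r ∂(A.prod B)
            ≤ ∫⁻ _ : Ω × Ω, δe ^ r ∂(A.prod B) :=
              lintegral_mono fun pr => ENNReal.rpow_le_rpow (hedist _ _) hr0.le
          _ = δe ^ r * (T * T) := by
              rw [lintegral_const, ← Set.univ_prod_univ, Measure.prod_prod, hAuniv, hBuniv]
      rw [h1, zero_add]
      calc T⁻¹ * ∫⁻ pr : Ω × Ω, edist pr.1 pr.2 ^ r ∂(A.prod B)
          ≤ T⁻¹ * (δe ^ r * (T * T)) := mul_le_mul_right h2 _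
        _ = δe ^ r * T := by
            rw [← mul_assoc, ← mul_assoc, mul_comm T⁻¹ (δe ^ r), mul_assoc (δe ^ r),
              ENNReal.inv_mul_cancel hT0 hTne, mul_one]
    exact le_trans (iInf₂_le μ hmem) hcost

end Coupling

section PartB

variable {Ω : Type*} [Fintype Ω] [MeasurableSpace Ω] [MeasurableSingletonClass Ω]

lemma emp_apply (n : ℕ) (ω : Fin n → Ω) (pt : Ω) [DecidableEq Ω] :
    empiricalMeasure n ω {pt}
      = (n : ℝ≥0∞)⁻¹ * ∑ i : Fin n, (if ω i = pt then (1 : ℝ≥0∞) else 0) := by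
  rw [empiricalMeasure, Measure.smul_apply, Measure.finset_sum_apply, smul_eq_mul]
  congr 1
  refine Finset.sum_congr rfl fun i _ => ?_
  rw [Measure.dirac_apply' _ (measurableSet_singleton pt)]
  simp [Set.indicator, Set.mem_singleton_iff]

lemma meas_z (n : ℕ) (pt : Ω) (i : Fin n) [DecidableEq Ω] :
    Measurable (fun ω : Fin n → Ω => (if ω i = pt then (1 : ℝ≥0∞) else 0)) := by
  have hs : MeasurableSet {ω : Fin n → Ω | ω i = pt} := by
    have h : {ω : Fin n → Ω | ω i = pt} = (fun ω : Fin n → Ω => ω i) ⁻¹' {pt} := rfl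
    rw [h]; exact measurable_pi_apply i (measurableSet_singleton pt)
  exact Measurable.ite hs measurable_const measurable_const

lemma meas_emp (n : ℕ) (pt : Ω) [DecidableEq Ω] :
    Measurable (fun ω : Fin n → Ω => empiricalMeasure n ω {pt}) := by
  simp_rw [emp_apply]
  exact (Finset.measurable_sum _ fun i _ => meas_z n pt i).const_mul _

lemma lint_z (P : Measure Ω) [IsProbabilityMeasure P] (n : ℕ) (pt : Ω) (i : Fin n)
    [DecidableEq Ω] :
    ∫⁻ ω, (if ω i = pt then (1 : ℝ≥0∞) else 0) ∂(Measure.pi fun _ : Fin n => P) = P {pt} := by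
  classical
  have h1 : (fun ω : Fin n → Ω => (if ω i = pt then (1 : ℝ≥0∞) else 0))
      = Set.indicator {ω : Fin n → Ω | ω i = pt} (fun _ => 1) := by
    ext ω; simp [Set.indicator]
  have hs : MeasurableSet {ω : Fin n → Ω | ω i = pt} := by
    have h : {ω : Fin n → Ω | ω i = pt} = (fun ω : Fin n → Ω => ω i) ⁻¹' {pt} := rfl
    rw [h]; exact measurable_pi_apply i (measurableSet_singleton pt)
  rw [h1, lintegral_indicator hs, setLIntegral_const, one_mul]
  have h2 : {ω : Fin n → Ω | ω i = pt}
      = Set.pi Set.univ (fun k => if k = i then ({pt} : Set Ω) else Set.univ) := by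
    ext ω
    simp only [Set.mem_setOf_eq, Set.mem_pi, Set.mem_univ, true_implies]
    constructor
    · intro h k
      by_cases hk : k = i <;> simp [hk, h]
    · intro h
      have := h i
      simpa using this
  rw [h2, Measure.pi_pi]
  have h3 : ∀ k : Fin n, P (if k = i then ({pt} : Set Ω) else Set.univ)
      = if k = i then P {pt} else 1 := by
    intro k; by_cases hk : k = i <;> simp [hk]
  simp_rw [h3]
  simp [Finset.prod_ite_eq' Finset.univ i (fun _ => P {pt})]

lemma lint_zz (P : Measure Ω) [IsProbabilityMeasure P] (n : ℕ) (pt : Ω) (i j : Fin n)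
    (hij : i ≠ j) [DecidableEq Ω] :
    ∫⁻ ω, (if ω i = pt then (1 : ℝ≥0∞) else 0) * (if ω j = pt then (1 : ℝ≥0∞) else 0)
        ∂(Measure.pi fun _ : Fin n => P) = P {pt} * P {pt} := by
  classical
  have h1 : (fun ω : Fin n → Ω =>
        (if ω i = pt then (1 : ℝ≥0∞) else 0) * (if ω j = pt then (1 : ℝ≥0∞) else 0))
      = Set.indicator {ω : Fin n → Ω | ω i = pt ∧ ω j = pt} (fun _ => 1) := by
    ext ω
    by_cases h1 : ω i = pt <;> by_cases h2 : ω j = pt <;> simp [Set.indicator, h1, h2]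
  have hs : MeasurableSet {ω : Fin n → Ω | ω i = pt ∧ ω j = pt} := by
    have : {ω : Fin n → Ω | ω i = pt ∧ ω j = pt}
        = {ω : Fin n → Ω | ω i = pt} ∩ {ω : Fin n → Ω | ω j = pt} := rfl
    have hi : {ω : Fin n → Ω | ω i = pt} = (fun ω : Fin n → Ω => ω i) ⁻¹' {pt} := rfl
    have hj : {ω : Fin n → Ω | ω j = pt} = (fun ω : Fin n → Ω => ω j) ⁻¹' {pt} := rfl
    rw [this, hi, hj]
    exact (measurable_pi_apply i (measurableSet_singleton pt)).inter
      (measurable_pi_apply j (measurableSet_singleton pt))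
  rw [h1, lintegral_indicator hs, setLIntegral_const, one_mul]
  have h2 : {ω : Fin n → Ω | ω i = pt ∧ ω j = pt}
      = Set.pi Set.univ (fun k => if k = i ∨ k = j then ({pt} : Set Ω) else Set.univ) := by
    ext ω
    simp only [Set.mem_setOf_eq, Set.mem_pi, Set.mem_univ, true_implies]
    constructor
    · rintro ⟨hi, hj⟩ k
      by_cases hk : k = i ∨ k = j
      · rcases hk with h | h <;> simp [h, hi, hj]
      · simp [hk]
    · intro h
      refine ⟨?_, ?_⟩
      · have := h i; simpa using this
      · have := h j; simpa using this
  rw [h2, Measure.pi_pi]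
  have h3 : ∀ k : Fin n, P (if k = i ∨ k = j then ({pt} : Set Ω) else Set.univ)
      = if k = i ∨ k = j then P {pt} else 1 := by
    intro k
    by_cases hk : k = i ∨ k = j <;> simp [hk]
  simp_rw [h3]
  rw [Finset.prod_ite, Finset.prod_const, Finset.prod_const, one_pow, mul_one]
  have : Finset.filter (fun k : Fin n => k = i ∨ k = j) Finset.univ = {i, j} := by
    ext k; simp
  rw [this, Finset.card_insert_of_notMem (by simpa using hij), Finset.card_singleton]
  rw [sq]

end PartB

section PartC

variable {Ω : Type*} [Fintype Ω] [MeasurableSpace Ω] [MeasurableSingletonClass Ω]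

lemma ennrDiff_sq (u v : ℝ≥0∞) (hu : u ≠ ∞) (hv : v ≠ ∞) :
    ennrDiff u v * ennrDiff u v + 2 * (u * v) = u * u + v * v := by
  rcases le_total u v with h | h
  · obtain ⟨w, rfl⟩ := exists_add_of_le h
    rw [ennrDiff, tsub_eq_zero_of_le h, ENNReal.add_sub_cancel_left hu, zero_add]
    ring
  · obtain ⟨w, rfl⟩ := exists_add_of_le h
    rw [ennrDiff, ENNReal.add_sub_cancel_left hv, tsub_eq_zero_of_le h, add_zero]
    ring

lemma lint_emp (P : Measure Ω) [IsProbabilityMeasure P] (n : ℕ) (hn : 0 < n) (pt : Ω)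
    [DecidableEq Ω] :
    ∫⁻ ω, empiricalMeasure n ω {pt} ∂(Measure.pi fun _ : Fin n => P) = P {pt} := by
  simp_rw [emp_apply]
  rw [lintegral_const_mul _ (Finset.measurable_sum _ fun i _ => meas_z n pt i),
    lintegral_finset_sum _ fun i _ => meas_z n pt i]
  simp_rw [lint_z]
  rw [Finset.sum_const, Finset.card_univ, Fintype.card_fin, nsmul_eq_mul, ← mul_assoc,
    ENNReal.inv_mul_cancel (Nat.cast_ne_zero.mpr hn.ne') (natCast_ne_top n), one_mul]

lemma emp_ne_top (n : ℕ) (hn : 0 < n) (ω : Fin n → Ω) (pt : Ω) [DecidableEq Ω] :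
    empiricalMeasure n ω {pt} ≠ ∞ := by
  rw [emp_apply]
  refine (lt_of_le_of_lt ?_ (lt_top_iff_ne_top.mpr one_ne_top)).ne
  calc (n : ℝ≥0∞)⁻¹ * ∑ i : Fin n, (if ω i = pt then (1:ℝ≥0∞) else 0)
      ≤ (n : ℝ≥0∞)⁻¹ * ∑ _i : Fin n, (1:ℝ≥0∞) := by
        gcongr with i
        split <;> simp
    _ = 1 := by
        rw [Finset.sum_const, Finset.card_univ, Fintype.card_fin, nsmul_eq_mul, mul_one,
          ENNReal.inv_mul_cancel (Nat.cast_ne_zero.mpr hn.ne') (natCast_ne_top n)]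

lemma lint_emp_sq (P : Measure Ω) [IsProbabilityMeasure P] (n : ℕ) (hn : 0 < n) (pt : Ω)
    [DecidableEq Ω] :
    ∫⁻ ω, empiricalMeasure n ω {pt} * empiricalMeasure n ω {pt}
        ∂(Measure.pi fun _ : Fin n => P)
      = (n : ℝ≥0∞)⁻¹ * (n : ℝ≥0∞)⁻¹
          * ((n : ℝ≥0∞) * (P {pt} + ((n - 1 : ℕ) : ℝ≥0∞) * (P {pt} * P {pt}))) := by
  classical
  have hz := fun i => meas_z (Ω := Ω) n pt i
  simp_rw [emp_apply]
  have hrw : ∀ ω : Fin n → Ω,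
      ((n : ℝ≥0∞)⁻¹ * ∑ i : Fin n, (if ω i = pt then (1:ℝ≥0∞) else 0))
        * ((n : ℝ≥0∞)⁻¹ * ∑ j : Fin n, (if ω j = pt then (1:ℝ≥0∞) else 0))
      = (n : ℝ≥0∞)⁻¹ * (n : ℝ≥0∞)⁻¹
          * ∑ i : Fin n, ∑ j : Fin n,
              (if ω i = pt then (1:ℝ≥0∞) else 0) * (if ω j = pt then (1:ℝ≥0∞) else 0) := by
    intro ω
    rw [mul_mul_mul_comm, Finset.sum_mul_sum]
  simp_rw [hrw]
  rw [lintegral_const_mul _ (by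
    exact Finset.measurable_sum _ fun i _ =>
      Finset.measurable_sum _ fun j _ => (hz i).mul (hz j))]
  congr 1
  rw [lintegral_finset_sum _ (fun i _ =>
    Finset.measurable_sum _ fun j _ => (hz i).fun_mul (hz j))]
  have hinner : ∀ i : Fin n,
      (∫⁻ ω, ∑ j : Fin n, (if ω i = pt then (1:ℝ≥0∞) else 0)
          * (if ω j = pt then (1:ℝ≥0∞) else 0) ∂(Measure.pi fun _ : Fin n => P))
        = P {pt} + ((n - 1 : ℕ) : ℝ≥0∞) * (P {pt} * P {pt}) := by
    intro i
    rw [lintegral_finset_sum _ (fun j _ => (hz i).fun_mul (hz j))]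
    have hsplit : ∀ j : Fin n,
        (∫⁻ ω, (if ω i = pt then (1:ℝ≥0∞) else 0)
            * (if ω j = pt then (1:ℝ≥0∞) else 0) ∂(Measure.pi fun _ : Fin n => P))
          = if j = i then P {pt} else P {pt} * P {pt} := by
      intro j
      by_cases hj : j = i
      · subst hj
        have hfun : (fun ω : Fin n → Ω => (if ω j = pt then (1:ℝ≥0∞) else 0)
            * (if ω j = pt then (1:ℝ≥0∞) else 0))
            = fun ω : Fin n → Ω => (if ω j = pt then (1:ℝ≥0∞) else 0) := by
          ext ω; split <;> simp
        rw [hfun, lint_z, if_pos rfl]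
      · rw [lint_zz P n pt i j (fun h => hj (h ▸ rfl)), if_neg hj]
    simp_rw [hsplit]
    rw [← Finset.add_sum_erase _ _ (Finset.mem_univ i), if_pos rfl]
    congr 1
    rw [Finset.sum_congr rfl (fun j hj => if_neg (Finset.ne_of_mem_erase hj)),
      Finset.sum_const, Finset.card_erase_of_mem (Finset.mem_univ i), Finset.card_univ,
      Fintype.card_fin, nsmul_eq_mul]
  simp_rw [hinner]
  rw [Finset.sum_const, Finset.card_univ, Fintype.card_fin, nsmul_eq_mul]

end PartC

section PartD

variable {Ω : Type*} [Fintype Ω] [MeasurableSpace Ω] [MeasurableSingletonClass Ω]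

lemma perpoint_sq (P : Measure Ω) [IsProbabilityMeasure P] (n : ℕ) (hn : 0 < n) (pt : Ω)
    [DecidableEq Ω] :
    ∫⁻ ω, ennrDiff (P {pt}) (empiricalMeasure n ω {pt})
          * ennrDiff (P {pt}) (empiricalMeasure n ω {pt}) ∂(Measure.pi fun _ : Fin n => P)
      ≤ ENNReal.ofReal ((P {pt}).toReal * (1 - (P {pt}).toReal) / n) := by
  classical
  set μ := Measure.pi fun _ : Fin n => P with hμ
  set p : ℝ≥0∞ := P {pt} with hpdef
  set x : ℝ := p.toReal with hx
  have hpne : p ≠ ∞ := measure_ne_top P _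
  have hple : p ≤ 1 := prob_le_one
  set E : (Fin n → Ω) → ℝ≥0∞ := fun ω => empiricalMeasure n ω {pt} with hE
  have hEm : Measurable E := meas_emp n pt
  have hEne : ∀ ω, E ω ≠ ∞ := fun ω => emp_ne_top n hn ω pt
  set g : (Fin n → Ω) → ℝ≥0∞ := fun ω => ennrDiff p (E ω) with hg
  have hgm : Measurable g := (measurable_const.sub hEm).add (hEm.sub measurable_const)
  -- pointwise identity
  have hpt : ∀ ω, g ω * g ω + 2 * p * E ω = p * p + E ω * E ω := by
    intro ω
    have := ennrDiff_sq p (E ω) hpne (hEne ω)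
    rw [← this]; ring
  have hint : (∫⁻ ω, g ω * g ω ∂μ) + 2 * p * p = p * p + ∫⁻ ω, E ω * E ω ∂μ := by
    have hcongr : ∫⁻ ω, (g ω * g ω + 2 * p * E ω) ∂μ = ∫⁻ ω, (p * p + E ω * E ω) ∂μ :=
      lintegral_congr hpt
    rw [lintegral_add_left (hgm.fun_mul hgm), lintegral_const_mul _ hEm,
      lintegral_add_left measurable_const, lintegral_const, measure_univ, mul_one] at hcongr
    rw [hμ] at hcongr
    rw [hμ, ← hcongr, lint_emp P n hn pt]
  -- value of the second moment
  have hval : ∫⁻ ω, E ω * E ω ∂μ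
      = (n : ℝ≥0∞)⁻¹ * (n : ℝ≥0∞)⁻¹
          * ((n : ℝ≥0∞) * (p + ((n - 1 : ℕ) : ℝ≥0∞) * (p * p))) := by
    rw [hμ]; exact lint_emp_sq P n hn pt
  have hfin : (∫⁻ ω, g ω * g ω ∂μ) ≠ ∞ := by
    intro htop
    rw [htop] at hint
    have : (⊤ : ℝ≥0∞) = p * p + ∫⁻ ω, E ω * E ω ∂μ := by
      rw [← hint]; simp
    rw [hval] at this
    exact (ENNReal.add_ne_top.mpr ⟨ENNReal.mul_ne_top hpne hpne,
      ENNReal.mul_ne_top (ENNReal.mul_ne_top (ENNReal.inv_ne_top.mpr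
        (Nat.cast_ne_zero.mpr hn.ne')) (ENNReal.inv_ne_top.mpr (Nat.cast_ne_zero.mpr hn.ne')))
      (ENNReal.mul_ne_top (natCast_ne_top n) (ENNReal.add_ne_top.mpr ⟨hpne,
        ENNReal.mul_ne_top (natCast_ne_top _) (ENNReal.mul_ne_top hpne hpne)⟩))⟩) this.symm
  have hx0 : 0 ≤ x := ENNReal.toReal_nonneg
  have hx1 : x ≤ 1 := by
    rw [hx]
    exact ENNReal.toReal_le_of_le_ofReal zero_le_one (by simpa using hple)
  have hnR : (0 : ℝ) < n := Nat.cast_pos.mpr hn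
  have hnn : ((n:ℝ≥0∞)) ≠ ⊤ := natCast_ne_top n
  have hinvne : ((n:ℝ≥0∞))⁻¹ ≠ ⊤ := ENNReal.inv_ne_top.mpr (Nat.cast_ne_zero.mpr hn.ne')
  have hppne : p * p ≠ ⊤ := ENNReal.mul_ne_top hpne hpne
  have hbigne : ((n:ℝ≥0∞)) * (p + ((n - 1 : ℕ) : ℝ≥0∞) * (p * p)) ≠ ⊤ :=
    ENNReal.mul_ne_top hnn (ENNReal.add_ne_top.mpr ⟨hpne,
      ENNReal.mul_ne_top (natCast_ne_top _) hppne⟩)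
  rw [ENNReal.le_ofReal_iff_toReal_le hfin
    (div_nonneg (mul_nonneg hx0 (by linarith)) hnR.le)]
  -- take toReal of hint
  have h2pp : (2 * p * p) ≠ ∞ := ENNReal.mul_ne_top (ENNReal.mul_ne_top (by simp) hpne) hpne
  have htr := congrArg ENNReal.toReal hint
  rw [ENNReal.toReal_add hfin h2pp, hval] at htr
  rw [ENNReal.toReal_add hppne
    (ENNReal.mul_ne_top (ENNReal.mul_ne_top hinvne hinvne) hbigne)] at htr
  simp only [ENNReal.toReal_mul, ENNReal.toReal_add hpne
      (ENNReal.mul_ne_top (natCast_ne_top _) hppne),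
    ENNReal.toReal_inv, ENNReal.toReal_natCast, ENNReal.toReal_ofNat] at htr
  have hcast : ((n - 1 : ℕ) : ℝ) = (n : ℝ) - 1 := by
    rw [Nat.cast_sub hn]; simp
  rw [hcast, ← hx] at htr
  set G : ℝ := (∫⁻ ω, g ω * g ω ∂μ).toReal with hG
  have hG2 : G = x * x + ((n:ℝ))⁻¹ * ((n:ℝ))⁻¹ * ((n:ℝ) * (x + ((n:ℝ) - 1) * (x * x)))
      - 2 * x * x := by linarith [htr]
  rw [hG2]
  have : x * x + (↑n)⁻¹ * (↑n)⁻¹ * (↑n * (x + (↑n - 1) * (x * x))) - 2 * x * x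
      = x * (1 - x) / ↑n := by
    field_simp
    ring
  rw [this]
end PartD

section PartE

variable {Ω : Type*} [Fintype Ω] [MeasurableSpace Ω] [MeasurableSingletonClass Ω]

lemma perpoint (P : Measure Ω) [IsProbabilityMeasure P] (n : ℕ) (hn : 0 < n) (pt : Ω)
    [DecidableEq Ω] :
    ∫⁻ ω, ennrDiff (P {pt}) (empiricalMeasure n ω {pt}) ∂(Measure.pi fun _ : Fin n => P)
      ≤ ENNReal.ofReal (Real.sqrt ((P {pt}).toReal * (1 - (P {pt}).toReal) / n)) := by
  classical
  set μ := Measure.pi fun _ : Fin n => P with hμ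
  set p : ℝ≥0∞ := P {pt} with hpdef
  set x : ℝ := p.toReal with hx
  have hEm : Measurable (fun ω : Fin n → Ω => empiricalMeasure n ω {pt}) := meas_emp n pt
  set g : (Fin n → Ω) → ℝ≥0∞ := fun ω => ennrDiff p (empiricalMeasure n ω {pt}) with hg
  have hgm : Measurable g := (measurable_const.sub hEm).add (hEm.sub measurable_const)
  have hconj : Real.HolderConjugate 2 2 := Real.HolderConjugate.two_two
  have hCS := ENNReal.lintegral_mul_le_Lp_mul_Lq μ hconj hgm.aemeasurable
    (aemeasurable_const (b := (1 : ℝ≥0∞)))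
  simp only [Pi.mul_apply, mul_one, ENNReal.one_rpow, lintegral_one, measure_univ,
    ENNReal.one_rpow] at hCS
  have hsq : ∀ u : ℝ≥0∞, u ^ (2:ℝ) = u * u := fun u => by
    rw [show (2:ℝ) = ((2:ℕ):ℝ) by norm_num, ENNReal.rpow_natCast]; ring
  simp_rw [hsq] at hCS
  have hx0 : 0 ≤ x := ENNReal.toReal_nonneg
  have hx1 : x ≤ 1 := ENNReal.toReal_le_of_le_ofReal zero_le_one (by simpa using prob_le_one (μ := P) (s := {pt}))
  have hnR : (0:ℝ) < n := Nat.cast_pos.mpr hn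
  have hnonneg : (0:ℝ) ≤ x * (1 - x) / n := div_nonneg (mul_nonneg hx0 (by linarith)) hnR.le
  calc ∫⁻ ω, g ω ∂μ ≤ (∫⁻ ω, g ω * g ω ∂μ) ^ (1/(2:ℝ)) := hCS
    _ ≤ (ENNReal.ofReal (x * (1 - x) / n)) ^ (1/(2:ℝ)) := by
        refine ENNReal.rpow_le_rpow ?_ (by norm_num)
        exact perpoint_sq P n hn pt
    _ = ENNReal.ofReal (Real.sqrt (x * (1 - x) / n)) := by
        rw [ENNReal.ofReal_rpow_of_nonneg hnonneg (by norm_num), Real.sqrt_eq_rpow]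

lemma real_sum_sqrt [Nonempty Ω] (f : Ω → ℝ) (hf0 : ∀ t, 0 ≤ f t) (hf1 : ∀ t, f t ≤ 1)
    (hsum : ∑ t : Ω, f t = 1) (n : ℕ) (hn : 0 < n) :
    ∑ t : Ω, Real.sqrt (f t * (1 - f t) / n)
      ≤ Real.sqrt (((Fintype.card Ω : ℝ) - 1) / n) := by
  have hnR : (0:ℝ) < n := Nat.cast_pos.mpr hn
  have hcard : (1:ℝ) ≤ Fintype.card Ω := by
    exact_mod_cast Fintype.card_pos_iff.mpr ‹Nonempty Ω›
  have h1 : ∀ t : Ω, Real.sqrt (f t * (1 - f t) / n)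
      = Real.sqrt (f t * (1 - f t)) / Real.sqrt n := fun t => Real.sqrt_div (by
        exact mul_nonneg (hf0 t) (by linarith [hf1 t])) n
  simp_rw [h1, ← Finset.sum_div]
  rw [Real.sqrt_div (by linarith) (n : ℝ)]
  gcongr
  have hCS : (∑ t : Ω, Real.sqrt (f t * (1 - f t))) ^ 2
      ≤ (∑ t : Ω, f t) * (∑ t : Ω, (1 - f t)) := by
    refine Finset.sum_sq_le_sum_mul_sum_of_sq_eq_mul Finset.univ
      (fun t _ => hf0 t) (fun t _ => by linarith [hf1 t]) (fun t _ => ?_)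
    exact Real.sq_sqrt (mul_nonneg (hf0 t) (by linarith [hf1 t]))
  have hsum2 : (∑ t : Ω, (1 - f t)) = (Fintype.card Ω : ℝ) - 1 := by
    rw [Finset.sum_sub_distrib, Finset.sum_const, Finset.card_univ, hsum]
    simp
  rw [hsum, one_mul, hsum2] at hCS
  calc ∑ t : Ω, Real.sqrt (f t * (1 - f t))
      = Real.sqrt ((∑ t : Ω, Real.sqrt (f t * (1 - f t))) ^ 2) := by
        rw [Real.sqrt_sq (Finset.sum_nonneg fun t _ => Real.sqrt_nonneg _)]
    _ ≤ Real.sqrt ((Fintype.card Ω : ℝ) - 1) := Real.sqrt_le_sqrt hCS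

end PartE

/-- Example 1 (upper bound): on a finite space with the scaled discrete metric
`ρ(x,y) = δ·1{x ≠ y}`, the empirical distribution satisfies
`E[W_r^r(P,P̂)] ≤ δ^r √((|Ω|-1)/n)`. -/
theorem stmt_10 {Ω : Type*} [Fintype Ω] [Nonempty Ω]
    [MetricSpace Ω] [MeasurableSpace Ω] [BorelSpace Ω]
    (δ : ℝ) (hδ : 0 < δ) (hρ : ∀ x y : Ω, x ≠ y → dist x y = δ)
    (r : ℝ) (hr : 1 ≤ r) (P : MeasureTheory.Measure Ω)
    [MeasureTheory.IsProbabilityMeasure P] (n : ℕ) (hn : 0 < n) :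
    ∫⁻ x, wassersteinPow r P (empiricalMeasure n x)
        ∂(MeasureTheory.Measure.pi fun _ : Fin n => P)
      ≤ ENNReal.ofReal (δ ^ r * Real.sqrt (((Fintype.card Ω : ℝ) - 1) / n)) := by
  classical
  have hr0 : (0:ℝ) < r := lt_of_lt_of_le zero_lt_one hr
  set δe : ℝ≥0∞ := ENNReal.ofReal δ with hδe
  have hedist : ∀ x y : Ω, edist x y ≤ δe := by
    intro x y
    by_cases h : x = y
    · simp [h]
    · rw [edist_dist, hρ x y h]
  have hμprob : ∀ ω : Fin n → Ω, IsProbabilityMeasure (empiricalMeasure n ω) := by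
    intro ω
    constructor
    rw [empiricalMeasure, Measure.smul_apply, Measure.finset_sum_apply]
    simp only [measure_univ, Finset.sum_const, Finset.card_univ, Fintype.card_fin,
      nsmul_eq_mul, mul_one, smul_eq_mul]
    exact ENNReal.inv_mul_cancel (Nat.cast_ne_zero.mpr hn.ne') (natCast_ne_top n)
  have hpoint : ∀ ω : Fin n → Ω, wassersteinPow r P (empiricalMeasure n ω)
      ≤ δe ^ r * ∑ pt : Ω, (P {pt} - empiricalMeasure n ω {pt}) := by
    intro ω
    haveI := hμprob ω
    exact wpow_le r hr0 δe ofReal_ne_top hedist P _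
  have hmeas_term : ∀ pt : Ω,
      Measurable fun ω : Fin n → Ω => P {pt} - empiricalMeasure n ω {pt} :=
    fun pt => measurable_const.sub (meas_emp n pt)
  set x : Ω → ℝ := fun pt => (P {pt}).toReal with hxdef
  have hx0 : ∀ pt, 0 ≤ x pt := fun pt => ENNReal.toReal_nonneg
  have hx1 : ∀ pt, x pt ≤ 1 := fun pt =>
    ENNReal.toReal_le_of_le_ofReal zero_le_one (by simpa using prob_le_one (μ := P) (s := {pt}))
  have hxsum : ∑ pt : Ω, x pt = 1 := by
    have h1 : ∑ pt : Ω, P {pt} = 1 := by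
      have := congrArg (fun μ : Measure Ω => μ Set.univ) (meas_eq_sum P)
      simp only [measure_univ, Measure.finset_sum_apply, Measure.smul_apply,
        measure_univ, smul_eq_mul, mul_one] at this
      exact this.symm
    rw [hxdef, ← ENNReal.toReal_sum (fun pt _ => measure_ne_top P _), h1, ENNReal.toReal_one]
  calc ∫⁻ ω, wassersteinPow r P (empiricalMeasure n ω) ∂(Measure.pi fun _ : Fin n => P)
      ≤ ∫⁻ ω, δe ^ r * ∑ pt : Ω, (P {pt} - empiricalMeasure n ω {pt})
          ∂(Measure.pi fun _ : Fin n => P) := lintegral_mono hpoint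
    _ = δe ^ r * ∑ pt : Ω, ∫⁻ ω, (P {pt} - empiricalMeasure n ω {pt})
          ∂(Measure.pi fun _ : Fin n => P) := by
        rw [lintegral_const_mul _ (Finset.measurable_sum _ fun pt _ => hmeas_term pt),
          lintegral_finset_sum _ fun pt _ => hmeas_term pt]
    _ ≤ δe ^ r * ∑ pt : Ω, ENNReal.ofReal (Real.sqrt (x pt * (1 - x pt) / n)) := by
        gcongr with pt _
        calc ∫⁻ ω, (P {pt} - empiricalMeasure n ω {pt}) ∂(Measure.pi fun _ : Fin n => P)
            ≤ ∫⁻ ω, ennrDiff (P {pt}) (empiricalMeasure n ω {pt})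
                ∂(Measure.pi fun _ : Fin n => P) :=
              lintegral_mono fun ω => self_le_add_right _ _
          _ ≤ _ := perpoint P n hn pt
    _ = δe ^ r * ENNReal.ofReal (∑ pt : Ω, Real.sqrt (x pt * (1 - x pt) / n)) := by
        rw [ENNReal.ofReal_sum_of_nonneg fun pt _ => Real.sqrt_nonneg _]
    _ ≤ δe ^ r * ENNReal.ofReal (Real.sqrt (((Fintype.card Ω : ℝ) - 1) / n)) := by
        gcongr
        exact real_sum_sqrt x hx0 hx1 hxsum n hn
    _ = ENNReal.ofReal (δ ^ r * Real.sqrt (((Fintype.card Ω : ℝ) - 1) / n)) := by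
        rw [hδe, ENNReal.ofReal_rpow_of_pos hδ, ← ENNReal.ofReal_mul (Real.rpow_nonneg hδ.le r)]
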